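/- The set of affine rational points of the elliptic curve O_12 : y^2 = x^3 + 7x^2 + 12x over ℚ consists of exactly three points; that is, {(x, y) ∈ ℚ × ℚ : y^2 = x^3 + 7x^2 + 12x} = {(0, 0), (−3, 0), (−4, 0)}. -/

import Mathlib

/-- `x² = 3y²` forces `y = 0` (irrationality of √3), ℕ version. -/
private lemma nat_sq3 : ∀ a : ℕ, ∀ b : ℕ, a ^ 2 = 3 * b ^ 2 → b = 0 := by
  intro a
  induction a using Nat.strong_induction_on with
  | _ a IH =>
    intro b h
    rcases Nat.eq_zero_or_pos a with ha | ha
    · subst ha; simpa using h.symm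
    have h3a : 3 ∣ a := by
      have : (3 : ℕ).Prime := by norm_num
      exact this.dvd_of_dvd_pow (h ▸ Dvd.intro _ rfl)
    obtain ⟨a1, rfl⟩ := h3a
    have hb2 : b ^ 2 = 3 * a1 ^ 2 := by nlinarith
    have h3b : 3 ∣ b := by
      have : (3 : ℕ).Prime := by norm_num
      exact this.dvd_of_dvd_pow (hb2 ▸ Dvd.intro _ rfl)
    obtain ⟨b1, rfl⟩ := h3b
    have ha1 : a1 ^ 2 = 3 * b1 ^ 2 := by nlinarith
    have : b1 = 0 := IH a1 (by nlinarith) b1 ha1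
    simp [this]

private lemma int_sq3 {x y : ℤ} (h : x ^ 2 = 3 * y ^ 2) : y = 0 := by
  have hx : x.natAbs ^ 2 = 3 * y.natAbs ^ 2 := by
    have := congrArg Int.natAbs h
    rwa [Int.natAbs_pow, show ((3:ℤ) * y ^ 2).natAbs = 3 * y.natAbs ^ 2 by
      rw [Int.natAbs_mul, Int.natAbs_pow]; rfl] at this
  have := nat_sq3 x.natAbs y.natAbs hx
  exact Int.natAbs_eq_zero.mp this


private lemma lem3 {x y z : ℤ} (hodd : x % 2 = 1) (hy : y ≠ 0) (heven : 2 ∣ y)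
    (hcop : IsCoprime x y) (h : x ^ 2 + 3 * y ^ 2 = z ^ 2) :
    ∃ m n : ℤ, y = 2 * m * n ∧ (x = m ^ 2 - 3 * n ^ 2 ∨ x = 3 * n ^ 2 - m ^ 2) := by
  set z' : ℤ := |z| with hz'def
  have hz' : x ^ 2 + 3 * y ^ 2 = z' ^ 2 := by rw [hz'def, sq_abs]; exact h
  have hz'nn : 0 ≤ z' := abs_nonneg z
  have hz'odd : z' % 2 = 1 := by
    rcases Int.even_or_odd z' with he | ho
    · exfalso
      obtain ⟨k, hk⟩ := he
      obtain ⟨l, hl⟩ := heven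
      have h2 : (2:ℤ) ∣ x ^ 2 :=
        ⟨2*k*k - 6*l*l, by linear_combination hz' + (z' + (k+k))*hk - 3*(y + 2*l)*hl⟩
      have := Int.Prime.dvd_pow' (p := 2) (by norm_num) h2
      omega
    · exact Int.odd_iff.mp ho
  have hy2 : 0 < y ^ 2 := by positivity
  have hzgtx : x < z' ∧ -x < z' := by
    constructor <;> nlinarith [sq_nonneg (z' - x), sq_nonneg (z' + x)]
  obtain ⟨α, hα⟩ : (2:ℤ) ∣ (z' - x) := by omega
  obtain ⟨β, hβ⟩ : (2:ℤ) ∣ (z' + x) := by omega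
  obtain ⟨y₀, hy₀⟩ := heven
  have hαpos : 0 < α := by nlinarith [hzgtx.2]
  have hβpos : 0 < β := by nlinarith [hzgtx.1]
  have e1 : z' ^ 2 - x ^ 2 = 12 * y₀ ^ 2 := by
    rw [hy₀] at hz'; linear_combination (-1 : ℤ) * hz'
  have e2 : (4:ℤ) * (α * β) = 4 * (3 * y₀ ^ 2) := by
    have h4 : (2*α) * (2*β) = z'^2 - x^2 := by rw [← hα, ← hβ]; ring
    linear_combination h4 + e1
  have hprod : α * β = 3 * y₀ ^ 2 := mul_left_cancel₀ (by norm_num) e2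
  -- gcd x z' = 1
  have hxz : Int.gcd x z' = 1 := by
    set d : ℕ := Int.gcd x z' with hd
    have hdx : (d:ℤ) ∣ x := Int.gcd_dvd_left _ _
    have hdz : (d:ℤ) ∣ z' := Int.gcd_dvd_right _ _
    have hd3y : (d:ℤ) ∣ 3 * y ^ 2 := by
      have hsub : (d:ℤ) ∣ z' ^ 2 - x ^ 2 :=
        dvd_sub (Dvd.dvd.pow hdz (by norm_num)) (Dvd.dvd.pow hdx (by norm_num))
      rwa [show z' ^ 2 - x ^ 2 = 3 * y ^ 2 by linarith] at hsub
    have hdy : IsCoprime (d:ℤ) y := by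
      obtain ⟨u, v, huv⟩ := hcop
      obtain ⟨e, he⟩ := hdx
      exact ⟨u * e, v, by rw [he] at huv; linear_combination huv⟩
    have hd3 : (d:ℤ) ∣ 3 := (hdy.pow_right (n := 2)).dvd_of_dvd_mul_right hd3y
    have hdn3 : d ∣ 3 := by exact_mod_cast hd3
    have hdne3 : d ≠ 3 := by
      intro h3d
      have h3x : (3:ℤ) ∣ x := by have := hdx; rw [h3d] at this; exact_mod_cast this
      have h3z : (3:ℤ) ∣ z' := by have := hdz; rw [h3d] at this; exact_mod_cast this
      obtain ⟨x1, hx1⟩ := h3x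
      obtain ⟨z1, hz1⟩ := h3z
      have h9 : (3:ℤ) * y ^ 2 = 3 * (3 * (z1 ^ 2 - x1 ^ 2)) := by
        rw [hx1, hz1] at hz'; linear_combination hz'
      have h3y2 : (3:ℤ) ∣ y ^ 2 := ⟨z1 ^ 2 - x1 ^ 2, mul_left_cancel₀ (by norm_num) h9⟩
      have h3y' : (3:ℤ) ∣ y := Int.Prime.dvd_pow' (by norm_num) h3y2
      have hc3 : IsCoprime (3:ℤ) y := by
        obtain ⟨u, v, huv⟩ := hcop
        have he : x = 3 * x1 := hx1
        exact ⟨u * x1, v, by rw [he] at huv; linear_combination huv⟩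
      have := hc3.isUnit_of_dvd' dvd_rfl h3y'
      rw [Int.isUnit_iff] at this
      omega
    rcases (Nat.Prime.eq_one_or_self_of_dvd (by norm_num) d hdn3) with h1 | h3
    · exact h1
    · exact absurd h3 hdne3
  -- coprimality of α β
  have hαβ : IsCoprime α β := by
    rw [Int.isCoprime_iff_gcd_eq_one]
    set e : ℕ := Int.gcd α β with he
    have heα : (e:ℤ) ∣ α := Int.gcd_dvd_left _ _
    have heβ : (e:ℤ) ∣ β := Int.gcd_dvd_right _ _
    have hez : (e:ℤ) ∣ z' := by
      have hzab : z' = α + β := by omega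
      rw [hzab]; exact dvd_add heα heβ
    have hex : (e:ℤ) ∣ x := by
      have hxab : x = β - α := by omega
      rw [hxab]; exact dvd_sub heβ heα
    have : (e:ℤ) ∣ (Int.gcd x z' : ℤ) := Int.dvd_coe_gcd hex hez
    rw [hxz] at this
    exact Nat.dvd_one.mp (by exact_mod_cast this)
  -- 3 divides α or β
  have h3αβ : (3:ℤ) ∣ α * β := ⟨y₀ ^ 2, hprod⟩
  rcases (Int.prime_three.dvd_mul.mp h3αβ) with h3α | h3β
  · obtain ⟨α₁, hα₁⟩ := h3α
    have hprod1 : α₁ * β = y₀ ^ 2 := by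
      apply mul_left_cancel₀ (a := (3:ℤ)) (by norm_num)
      rw [← mul_assoc, ← hα₁]; linear_combination hprod
    have hcop1 : IsCoprime α₁ β := hαβ.of_isCoprime_of_dvd_left ⟨3, by linarith [hα₁]⟩
    obtain ⟨r, hr⟩ := Int.sq_of_isCoprime hcop1 hprod1
    obtain ⟨s, hs⟩ := Int.sq_of_isCoprime (c := y₀) hcop1.symm (by linear_combination hprod1)
    have hα₁pos : 0 < α₁ := by linarith [hα₁, hαpos]
    have hrpos : α₁ = r ^ 2 := by
      rcases hr with h' | h'
      · exact h'
      · linarith [sq_nonneg r]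
    have hspos : β = s ^ 2 := by
      rcases hs with h' | h'
      · exact h'
      · linarith [sq_nonneg s]
    have hy₀rs : (y₀ - r*s) * (y₀ + r*s) = 0 := by
      have : y₀ ^ 2 = (r*s)^2 := by rw [← hprod1, hrpos, hspos]; ring
      linear_combination this
    have hxval : x = s ^ 2 - 3 * r ^ 2 := by
      have hba : x = β - α := by omega
      linear_combination hba + hspos - hα₁ - 3*hrpos
    rcases mul_eq_zero.mp hy₀rs with h0 | h0
    · exact ⟨s, r, by rw [hy₀]; linarith, Or.inl hxval⟩
    · exact ⟨s, -r, by rw [hy₀]; linarith, Or.inl (by rw [hxval]; ring)⟩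
  · obtain ⟨β₁, hβ₁⟩ := h3β
    have hprod1 : α * β₁ = y₀ ^ 2 := by
      apply mul_left_cancel₀ (a := (3:ℤ)) (by norm_num)
      linear_combination hprod - α * hβ₁
    have hcop1 : IsCoprime α β₁ := (hαβ.symm.of_isCoprime_of_dvd_left ⟨3, by linarith [hβ₁]⟩).symm
    obtain ⟨r, hr⟩ := Int.sq_of_isCoprime hcop1 hprod1
    obtain ⟨s, hs⟩ := Int.sq_of_isCoprime (c := y₀) hcop1.symm (by linear_combination hprod1)
    have hβ₁pos : 0 < β₁ := by linarith [hβ₁, hβpos]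
    have hrpos : α = r ^ 2 := by
      rcases hr with h' | h'
      · exact h'
      · linarith [sq_nonneg r]
    have hspos : β₁ = s ^ 2 := by
      rcases hs with h' | h'
      · exact h'
      · linarith [sq_nonneg s]
    have hy₀rs : (y₀ - r*s) * (y₀ + r*s) = 0 := by
      have : y₀ ^ 2 = (r*s)^2 := by rw [← hprod1, hrpos, hspos]; ring
      linear_combination this
    have hxval : x = 3 * s ^ 2 - r ^ 2 := by
      have hba : x = β - α := by omega
      linear_combination hba + hβ₁ + 3*hspos - hrpos
    rcases mul_eq_zero.mp hy₀rs with h0 | h0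
    · exact ⟨r, s, by rw [hy₀]; linarith, Or.inr hxval⟩
    · exact ⟨r, -s, by rw [hy₀]; linarith, Or.inr (by rw [hxval]; ring)⟩


private lemma four_split {p q m n : ℕ} (hpq : p * q = m * n)
    (c1 : Nat.Coprime p q) (c2 : Nat.Coprime m n) :
    ∃ p₁ p₂ q₁ q₂ : ℕ, p = p₁ * p₂ ∧ q = q₁ * q₂ ∧ m = p₁ * q₁ ∧ n = p₂ * q₂ := by
  refine ⟨Nat.gcd p m, Nat.gcd p n, Nat.gcd q m, Nat.gcd q n, ?_, ?_, ?_, ?_⟩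
  · exact ((Nat.gcd_mul_gcd_eq_iff_dvd_mul_of_coprime c2).mpr ⟨q, hpq.symm⟩).symm
  · exact ((Nat.gcd_mul_gcd_eq_iff_dvd_mul_of_coprime c2).mpr ⟨p, by rw [← hpq]; ring⟩).symm
  · rw [Nat.gcd_comm p m, Nat.gcd_comm q m]
    exact ((Nat.gcd_mul_gcd_eq_iff_dvd_mul_of_coprime c1).mpr ⟨n, hpq⟩).symm
  · rw [Nat.gcd_comm p n, Nat.gcd_comm q n]
    exact ((Nat.gcd_mul_gcd_eq_iff_dvd_mul_of_coprime c1).mpr ⟨m, by rw [hpq]; ring⟩).symm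


private lemma d8a : ∀ x y c : ZMod 8, 2*c^2 ≠ (2*x+1)^2 - 3*(2*y+1)^2 := by decide
private lemma d8b : ∀ c d a : ZMod 8, a^2 ≠ (2*c)^2 + 3*(2*d+1)^2 := by decide
private lemma d8c : ∀ c d b : ZMod 8, b^2 ≠ (2*c+1)^2 + 4*(2*d+1)^2 := by decide
private lemma d4a : ∀ k d b : ZMod 4, (2*k+1)^2 + d^2 ≠ 4*b^2 := by decide
private lemma d2kill : ∀ a' d' b : ZMod 4, 2*b^2 ≠ (2*a')^2 + (2*d'+1)^2 := by decide
private lemma dodd : ∀ γ δ a' : ZMod 4, (2*a')^2 ≠ (2*γ+1)^2 + 3*(2*δ)^2 := by decide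

private lemma odd_cast {a : ℕ} (h : Odd a) : ∃ k : ℤ, (a:ℤ) = 2*k+1 := by
  obtain ⟨k, hk⟩ := h; exact ⟨(k:ℤ), by exact_mod_cast hk⟩

private lemma even_cast {a : ℕ} (h : Even a) : ∃ k : ℤ, (a:ℤ) = 2*k := by
  obtain ⟨k, hk⟩ := h; exact ⟨(k:ℤ), by push_cast [hk]; ring⟩

private lemma core {a b c d : ℕ} (ha : 0 < a) (hb : 0 < b) (hc : 0 < c) (hd : 0 < d)
    (cad : Nat.Coprime a d) (cbc : Nat.Coprime b c) (ccd : Nat.Coprime c d)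
    (heq : (a:ℤ)^2 * ((b:ℤ)^2 - (c:ℤ)^2) = (d:ℤ)^2 * ((c:ℤ)^2 + 3*(b:ℤ)^2)) :
    ∃ M N : ℕ, 0 < M ∧ 0 < N ∧ Nat.Coprime M N ∧ 2 * (M * N) = d ∧
      ∃ C : ℤ, (M:ℤ)^4 - 14*(M:ℤ)^2*(N:ℤ)^2 + (N:ℤ)^4 = C^2 := by
  have hcadZ : IsCoprime (a:ℤ) (d:ℤ) := by
    rw [Int.isCoprime_iff_gcd_eq_one, Int.gcd_natCast_natCast]; exact cad
  have hdvd : (a:ℤ)^2 ∣ ((c:ℤ)^2 + 3*(b:ℤ)^2) := by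
    have h1 : (a:ℤ)^2 ∣ (d:ℤ)^2 * ((c:ℤ)^2 + 3*(b:ℤ)^2) := ⟨(b:ℤ)^2 - (c:ℤ)^2, heq.symm⟩
    exact (hcadZ.pow).dvd_of_dvd_mul_left h1
  obtain ⟨T, hT⟩ := hdvd
  have haZ : (0:ℤ) < (a:ℤ) := by exact_mod_cast ha
  have hbZ : (0:ℤ) < (b:ℤ) := by exact_mod_cast hb
  have hcZ : (0:ℤ) < (c:ℤ) := by exact_mod_cast hc
  have hdZ : (0:ℤ) < (d:ℤ) := by exact_mod_cast hd
  have hT2 : (b:ℤ)^2 - (c:ℤ)^2 = (d:ℤ)^2 * T := by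
    have h2 : (a:ℤ)^2 * ((b:ℤ)^2 - (c:ℤ)^2) = (a:ℤ)^2 * ((d:ℤ)^2 * T) := by
      rw [heq, hT]; ring
    exact mul_left_cancel₀ (by positivity) h2
  have hTpos : 0 < T := by
    rcases lt_trichotomy T 0 with h | h | h
    · nlinarith [hT, mul_nonpos_of_nonneg_of_nonpos (sq_nonneg (a:ℤ)) (le_of_lt h)]
    · rw [h] at hT; nlinarith [hT]
    · exact h
  have h4b : 4*(b:ℤ)^2 = T*((a:ℤ)^2+(d:ℤ)^2) := by linear_combination hT + hT2
  have h4c : 4*(c:ℤ)^2 = T*((a:ℤ)^2-3*(d:ℤ)^2) := by linear_combination hT - 3*hT2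
  have hT4 : T ∣ 4 := by
    have hbcZ : IsCoprime ((b:ℤ)^2) ((c:ℤ)^2) := by
      have h3 : IsCoprime (b:ℤ) (c:ℤ) := by
        rw [Int.isCoprime_iff_gcd_eq_one, Int.gcd_natCast_natCast]; exact cbc
      exact h3.pow
    obtain ⟨u, v, huv⟩ := hbcZ
    exact ⟨u*((a:ℤ)^2+(d:ℤ)^2)+v*((a:ℤ)^2-3*(d:ℤ)^2),
      by linear_combination 4*huv.symm + u*h4b + v*h4c⟩
  have hTle : T ≤ 4 := Int.le_of_dvd (by norm_num) hT4
  have hnotboth : ¬ (2 ∣ a ∧ 2 ∣ d) := by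
    rintro ⟨h2a, h2d⟩
    have h5 := Nat.dvd_gcd h2a h2d
    rw [cad] at h5
    omega
  interval_cases T
  · -- T = 1
    exfalso
    have h1 : (a:ℤ)^2 + (d:ℤ)^2 = 4*(b:ℤ)^2 := by linarith [h4b]
    rcases Nat.even_or_odd a with haE | haO
    · have hdO : Odd d := by
        rcases Nat.even_or_odd d with hdE | h
        · exact absurd ⟨haE.two_dvd, hdE.two_dvd⟩ hnotboth
        · exact h
      obtain ⟨k, hk⟩ := odd_cast hdO
      have h1' : (2*k+1)^2 + (a:ℤ)^2 = 4*(b:ℤ)^2 := by rw [← hk]; linarith [h1]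
      have h8 := congrArg (fun t : ℤ => (t : ZMod 4)) h1'
      push_cast at h8
      exact d4a _ _ _ h8
    · obtain ⟨k, hk⟩ := odd_cast haO
      have h1' : (2*k+1)^2 + (d:ℤ)^2 = 4*(b:ℤ)^2 := by rw [← hk]; linarith [h1]
      have h8 := congrArg (fun t : ℤ => (t : ZMod 4)) h1'
      push_cast at h8
      exact d4a _ _ _ h8
  · -- T = 2
    exfalso
    have h2b : 2*(b:ℤ)^2 = (a:ℤ)^2 + (d:ℤ)^2 :=
      mul_left_cancel₀ (a := (2:ℤ)) (by norm_num) (by linarith [h4b])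
    have h2c : 2*(c:ℤ)^2 = (a:ℤ)^2 - 3*(d:ℤ)^2 :=
      mul_left_cancel₀ (a := (2:ℤ)) (by norm_num) (by linarith [h4c])
    have haO : Odd a := by
      rcases Nat.even_or_odd a with haE | h
      · exfalso
        have hdO : Odd d := by
          rcases Nat.even_or_odd d with hdE | h
          · exact absurd ⟨haE.two_dvd, hdE.two_dvd⟩ hnotboth
          · exact h
        obtain ⟨k, hk⟩ := odd_cast hdO
        obtain ⟨j, hj⟩ := even_cast haE
        have h1' : 2*(b:ℤ)^2 = (2*j)^2 + (2*k+1)^2 := by rw [← hk, ← hj]; linarith [h2b]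
        have h8 := congrArg (fun t : ℤ => (t : ZMod 4)) h1'
        push_cast at h8
        exact d2kill _ _ _ h8
      · exact h
    have hdO : Odd d := by
      rcases Nat.even_or_odd d with hdE | h
      · exfalso
        obtain ⟨k, hk⟩ := odd_cast haO
        obtain ⟨j, hj⟩ := even_cast hdE
        have h1' : 2*(b:ℤ)^2 = (2*j)^2 + (2*k+1)^2 := by rw [← hk, ← hj]; linarith [h2b]
        have h8 := congrArg (fun t : ℤ => (t : ZMod 4)) h1'
        push_cast at h8
        exact d2kill _ _ _ h8
      · exact h
    obtain ⟨k, hk⟩ := odd_cast haO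
    obtain ⟨l, hl⟩ := odd_cast hdO
    have h1' : 2*(c:ℤ)^2 = (2*k+1)^2 - 3*(2*l+1)^2 := by rw [← hk, ← hl]; linarith [h2c]
    have h8 := congrArg (fun t : ℤ => (t : ZMod 8)) h1'
    push_cast at h8
    exact d8a _ _ _ h8
  · -- T = 3 impossible
    exfalso; omega
  · -- T = 4
    have hb2 : (b:ℤ)^2 = (a:ℤ)^2 + (d:ℤ)^2 :=
      mul_left_cancel₀ (a := (4:ℤ)) (by norm_num) (by linarith [h4b])
    have hc2 : (c:ℤ)^2 = (a:ℤ)^2 - 3*(d:ℤ)^2 :=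
      mul_left_cancel₀ (a := (4:ℤ)) (by norm_num) (by linarith [h4c])
    have hcO : Odd c := by
      rcases Nat.even_or_odd c with hcE | h
      · exfalso
        have hdO : Odd d := by
          rcases Nat.even_or_odd d with hdE | h
          · exfalso
            have h5 := Nat.dvd_gcd hcE.two_dvd hdE.two_dvd
            rw [ccd] at h5; omega
          · exact h
        obtain ⟨γ, hγ⟩ := even_cast hcE
        obtain ⟨δ, hδ⟩ := odd_cast hdO
        have h1' : (a:ℤ)^2 = (2*γ)^2 + 3*(2*δ+1)^2 := by rw [← hγ, ← hδ]; linarith [hc2]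
        have h8 := congrArg (fun t : ℤ => (t : ZMod 8)) h1'
        push_cast at h8
        exact d8b _ _ _ h8
      · exact h
    have hdE : Even d := by
      rcases Nat.even_or_odd d with h | hdO
      · exact h
      · exfalso
        obtain ⟨γ, hγ⟩ := odd_cast hcO
        obtain ⟨δ, hδ⟩ := odd_cast hdO
        have h1' : (b:ℤ)^2 = (2*γ+1)^2 + 4*(2*δ+1)^2 := by
          rw [← hγ, ← hδ]; linarith [hb2, hc2]
        have h8 := congrArg (fun t : ℤ => (t : ZMod 8)) h1'
        push_cast at h8
        exact d8c _ _ _ h8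
    have haO : Odd a := by
      rcases Nat.even_or_odd a with haE | h
      · exfalso
        obtain ⟨γ, hγ⟩ := odd_cast hcO
        obtain ⟨δ, hδ⟩ := even_cast hdE
        obtain ⟨j, hj⟩ := even_cast haE
        have h1' : (2*j)^2 = (2*γ+1)^2 + 3*(2*δ)^2 := by rw [← hγ, ← hδ, ← hj]; linarith [hc2]
        have h8 := congrArg (fun t : ℤ => (t : ZMod 4)) h1'
        push_cast at h8
        exact dodd _ _ _ h8
      · exact h
    -- Pythagorean parametrization
    have hpt : PythagoreanTriple (a:ℤ) (d:ℤ) (b:ℤ) := by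
      have h7 : (a:ℤ)*(a:ℤ) + (d:ℤ)*(d:ℤ) = (b:ℤ)*(b:ℤ) := by linear_combination -hb2
      exact h7
    have hgcd : Int.gcd (a:ℤ) (d:ℤ) = 1 := by rw [Int.gcd_natCast_natCast]; exact cad
    have haMod : (a:ℤ) % 2 = 1 := by
      obtain ⟨k, hk⟩ := odd_cast haO; omega
    obtain ⟨M, N, hA, hD, hB, hMN, _hpar, _hMnn⟩ :=
      hpt.coprime_classification' hgcd haMod hbZ
    have hMNpos : 0 < M * N := by
      have h9 : 0 < 2*(M*N) := by
        have h10 : (2:ℤ)*(M*N) = (d:ℤ) := by rw [hD]; ring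
        rw [h10]; exact hdZ
      linarith
    refine ⟨M.natAbs, N.natAbs, ?_, ?_, hMN, ?_, ⟨(c:ℤ), ?_⟩⟩
    · rcases Nat.eq_zero_or_pos M.natAbs with h0 | h
      · exfalso; rw [Int.natAbs_eq_zero] at h0; rw [h0] at hMNpos; simp at hMNpos
      · exact h
    · rcases Nat.eq_zero_or_pos N.natAbs with h0 | h
      · exfalso; rw [Int.natAbs_eq_zero] at h0; rw [h0] at hMNpos; simp at hMNpos
      · exact h
    · -- 2 * (natAbs M * natAbs N) = d
      have habs : (((M*N).natAbs : ℕ) : ℤ) = M * N := Int.natAbs_of_nonneg (le_of_lt hMNpos)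
      have h6 : ((2 * (M*N).natAbs : ℕ) : ℤ) = ((d : ℕ) : ℤ) := by
        push_cast
        push_cast at habs
        rw [habs]
        linarith [hD]
      have h7 : 2 * (M*N).natAbs = d := Nat.cast_injective h6
      rw [Int.natAbs_mul] at h7
      exact h7
    · -- the new quartic equation
      have hM2 : ((M.natAbs : ℕ) : ℤ)^2 = M^2 := Int.natAbs_sq M
      have hN2 : ((N.natAbs : ℕ) : ℤ)^2 = N^2 := Int.natAbs_sq N
      have hCeq : (M:ℤ)^4 - 14*M^2*N^2 + N^4 = (c:ℤ)^2 := by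
        rw [hc2, hA, hD]; ring
      linear_combination hCeq + ((M.natAbs:ℤ)^2 + M^2 - 14*(N.natAbs:ℤ)^2) * hM2
        + ((N.natAbs:ℤ)^2 + N^2 - 14*M^2) * hN2


private lemma d32a : ∀ x y : ZMod 32, (2*x+1)^4 - 14*(2*x+1)^2*(2*y+1)^2 + (2*y+1)^4 = 20 := by decide
private lemma d32b : ∀ w : ZMod 32, w^2 ≠ 20 := by decide
private lemma dW : ∀ P y w : ZMod 4, (2*P)^4 - 14*(2*P)^2*(2*y+1)^2 + (2*y+1)^4 ≠ (2*w)^2 := by decide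
private lemma dW2 : ∀ P y w : ZMod 4, (2*y+1)^4 - 14*(2*y+1)^2*(2*P)^2 + (2*P)^4 ≠ (2*w)^2 := by decide

section
end

private lemma Tstar_aux : ∀ k : ℕ, ∀ p q : ℕ, ∀ w : ℤ, p * q = k → 0 < p → 0 < q →
    Nat.Coprime p q → ((p:ℤ)^4 - 14*(p:ℤ)^2*(q:ℤ)^2 + (q:ℤ)^4 = w^2) → False := by
  intro k
  induction k using Nat.strong_induction_on with
  | _ k IH =>
  intro p q w hk hp hq hcop heq
  have hpZ : (0:ℤ) < (p:ℤ) := by exact_mod_cast hp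
  have hqZ : (0:ℤ) < (q:ℤ) := by exact_mod_cast hq
  -- not both odd
  have hnotbothodd : ¬ (Odd p ∧ Odd q) := by
    rintro ⟨hop, hoq⟩
    obtain ⟨x, hx⟩ := odd_cast hop
    obtain ⟨y, hy⟩ := odd_cast hoq
    have h1' : (2*x+1)^4 - 14*(2*x+1)^2*(2*y+1)^2 + (2*y+1)^4 = w^2 := by
      rw [← hx, ← hy]; exact heq
    have h32 := congrArg (fun t : ℤ => (t : ZMod 32)) h1'
    push_cast at h32
    rw [d32a _ _] at h32
    exact d32b _ h32.symm
  have hnotbotheven : ¬ (2 ∣ p ∧ 2 ∣ q) := by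
    rintro ⟨h2p, h2q⟩
    have h5 := Nat.dvd_gcd h2p h2q
    rw [hcop] at h5
    omega
  -- w is odd
  have hwodd : Odd w := by
    rcases Int.even_or_odd w with hwe | h
    · exfalso
      obtain ⟨t, ht⟩ := hwe
      have htw : w = 2*t := by omega
      rcases Nat.even_or_odd p with hpe | hpo
      · have hqo : Odd q := by
          rcases Nat.even_or_odd q with hqe | h'
          · exact absurd ⟨hpe.two_dvd, hqe.two_dvd⟩ hnotbotheven
          · exact h'
        obtain ⟨P, hP⟩ := even_cast hpe
        obtain ⟨y, hy⟩ := odd_cast hqo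
        have h1' : (2*P)^4 - 14*(2*P)^2*(2*y+1)^2 + (2*y+1)^4 = (2*t)^2 := by
          rw [← hP, ← hy, ← htw]; exact heq
        have h4 := congrArg (fun u : ℤ => (u : ZMod 4)) h1'
        push_cast at h4
        exact dW _ _ _ h4
      · have hqe : Even q := by
          rcases Nat.even_or_odd q with h' | hqo
          · exact h'
          · exact absurd ⟨hpo, hqo⟩ hnotbothodd
        obtain ⟨P, hP⟩ := even_cast hqe
        obtain ⟨y, hy⟩ := odd_cast hpo
        have h1' : (2*y+1)^4 - 14*(2*y+1)^2*(2*P)^2 + (2*P)^4 = (2*t)^2 := by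
          rw [← hP, ← hy, ← htw]; exact heq
        have h4 := congrArg (fun u : ℤ => (u : ZMod 4)) h1'
        push_cast at h4
        exact dW2 _ _ _ h4
    · exact h
  -- w ≠ 0
  have hwne : w ≠ 0 := by
    intro hw0
    rw [hw0] at heq
    have h48 : ((p:ℤ)^2 - 7*(q:ℤ)^2)^2 = 3*(4*(q:ℤ)^2)^2 := by linear_combination heq
    have := int_sq3 h48
    nlinarith [this, hqZ]
  -- key identity
  have hkey : w^2 + 3*(2*(p:ℤ)*(q:ℤ))^2 = ((p:ℤ)^2 - (q:ℤ)^2)^2 := by linear_combination -heq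
  -- coprimality of w with 2pq
  have hcopZ : IsCoprime (p:ℤ) (q:ℤ) := by
    rw [Int.isCoprime_iff_gcd_eq_one, Int.gcd_natCast_natCast]; exact hcop
  have cop_pw : IsCoprime (p:ℤ) w := by
    have h1 : (q:ℤ)^4 + (p:ℤ)*((p:ℤ)^3 - 14*(p:ℤ)*(q:ℤ)^2) = w^2 := by linear_combination heq
    have h2 : IsCoprime (p:ℤ) (w^2) := h1 ▸ (hcopZ.pow_right.add_mul_left_right _)
    rw [sq] at h2
    exact h2.of_mul_right_left
  have cop_qw : IsCoprime (q:ℤ) w := by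
    have h1 : (p:ℤ)^4 + (q:ℤ)*((q:ℤ)^3 - 14*(q:ℤ)*(p:ℤ)^2) = w^2 := by linear_combination heq
    have h2 : IsCoprime (q:ℤ) (w^2) := h1 ▸ (hcopZ.symm.pow_right.add_mul_left_right _)
    rw [sq] at h2
    exact h2.of_mul_right_left
  have cop_2w : IsCoprime (2:ℤ) w := by
    obtain ⟨t, ht⟩ := hwodd
    exact ⟨-t, 1, by linarith⟩
  have cop_w2pq : IsCoprime w (2*(p:ℤ)*(q:ℤ)) := by
    have : IsCoprime w ((2:ℤ)*(p:ℤ)) := (cop_2w.symm).mul_right cop_pw.symm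
    exact this.mul_right cop_qw.symm
  -- apply the parametrization lemma
  have hy2 : (2:ℤ) ∣ 2*(p:ℤ)*(q:ℤ) := ⟨(p:ℤ)*(q:ℤ), by ring⟩
  have hyne : (2*(p:ℤ)*(q:ℤ)) ≠ 0 := by positivity
  obtain ⟨m, n, hmn, hw⟩ := lem3 (Int.odd_iff.mp hwodd) hyne hy2 cop_w2pq hkey
  have hpq_mn : (p:ℤ)*(q:ℤ) = m*n :=
    mul_left_cancel₀ (by norm_num : (2:ℤ) ≠ 0) (by linear_combination hmn)
  -- gcd m n = 1
  have hmncop : Int.gcd m n = 1 := by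
    set g : ℕ := Int.gcd m n with hgdef
    have hgm : (g:ℤ) ∣ m := Int.gcd_dvd_left _ _
    have hgn : (g:ℤ) ∣ n := Int.gcd_dvd_right _ _
    have hgw : (g:ℤ) ∣ w := by
      rcases hw with h' | h'
      · rw [h']
        exact dvd_sub (Dvd.dvd.pow hgm (by norm_num)) (Dvd.dvd.mul_left (Dvd.dvd.pow hgn (by norm_num)) 3)
      · rw [h']
        exact dvd_sub (Dvd.dvd.mul_left (Dvd.dvd.pow hgn (by norm_num)) 3) (Dvd.dvd.pow hgm (by norm_num))
    have hgy : (g:ℤ) ∣ 2*(p:ℤ)*(q:ℤ) := by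
      rw [hmn]
      exact Dvd.dvd.mul_left hgn (2*m)
    have h1 : (g:ℤ) ∣ (Int.gcd w (2*(p:ℤ)*(q:ℤ)) : ℤ) := Int.dvd_coe_gcd hgw hgy
    rw [Int.isCoprime_iff_gcd_eq_one.mp cop_w2pq] at h1
    exact Nat.dvd_one.mp (by exact_mod_cast h1)
  have hmnZcop : IsCoprime m n := Int.isCoprime_iff_gcd_eq_one.mpr hmncop
  -- m, n nonzero
  have hmnpos : 0 < m*n := by
    rw [← hpq_mn]; positivity
  -- square identity
  have hw2 : w^2 = (m^2 - 3*n^2)^2 := by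
    rcases hw with h' | h'
    · rw [h']
    · rw [h']; ring
  have hz2 : (((p:ℤ)^2 - (q:ℤ)^2) - (m^2+3*n^2)) * (((p:ℤ)^2 - (q:ℤ)^2) + (m^2+3*n^2)) = 0 := by
    linear_combination -hkey + hw2 + 12*((p:ℤ)*(q:ℤ) + m*n)*hpq_mn
  -- pass to natAbs
  set m' : ℕ := m.natAbs with hm'def
  set n' : ℕ := n.natAbs with hn'def
  have hm'2 : ((m':ℕ):ℤ)^2 = m^2 := Int.natAbs_sq m
  have hn'2 : ((n':ℕ):ℤ)^2 = n^2 := Int.natAbs_sq n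
  have hm'pos : 0 < m' := by
    rcases Nat.eq_zero_or_pos m' with h0 | h
    · exfalso; rw [hm'def, Int.natAbs_eq_zero] at h0; rw [h0] at hmnpos; simp at hmnpos
    · exact h
  have hn'pos : 0 < n' := by
    rcases Nat.eq_zero_or_pos n' with h0 | h
    · exfalso; rw [hn'def, Int.natAbs_eq_zero] at h0; rw [h0] at hmnpos; simp at hmnpos
    · exact h
  have hm'n'cop : Nat.Coprime m' n' := hmncop
  have hpqmn : p * q = m' * n' := by
    have h1 : ((p*q:ℕ):ℤ) = m*n := by push_cast; exact hpq_mn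
    have h2 : ((m'*n':ℕ):ℤ) = m*n := by
      push_cast [hm'def, hn'def, ← Int.natAbs_mul]
      exact abs_of_pos hmnpos
    exact Nat.cast_injective (h1.trans h2.symm)
  -- case split
  rcases mul_eq_zero.mp hz2 with hcase | hcase
  · -- p² - q² = m² + 3n²  (p > q side)
    have hcaseA : (p:ℤ)^2 - (q:ℤ)^2 = ((m':ℕ):ℤ)^2 + 3*((n':ℕ):ℤ)^2 := by
      rw [hm'2, hn'2]; linarith [hcase]
    obtain ⟨p₁, p₂, q₁, q₂, hps, hqs, hms, hns⟩ := four_split hpqmn hcop hm'n'cop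
    have hp₁ : 0 < p₁ := Nat.pos_of_ne_zero (by rintro rfl; simp at hps; omega)
    have hp₂ : 0 < p₂ := Nat.pos_of_ne_zero (by rintro rfl; simp at hps; omega)
    have hq₁ : 0 < q₁ := Nat.pos_of_ne_zero (by rintro rfl; simp at hqs; omega)
    have hq₂ : 0 < q₂ := Nat.pos_of_ne_zero (by rintro rfl; simp at hqs; omega)
    -- rewrite the case equation in terms of the split
    rw [hps, hqs, hms, hns] at hcaseA
    push_cast at hcaseA
    have heqA : (p₁:ℤ)^2*((p₂:ℤ)^2-(q₁:ℤ)^2) = (q₂:ℤ)^2*((q₁:ℤ)^2+3*(p₂:ℤ)^2) := by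
      linear_combination hcaseA
    have cad : Nat.Coprime p₁ q₂ :=
      Nat.Coprime.coprime_dvd_left ⟨p₂, hps⟩ (hcop.coprime_dvd_right ⟨q₁, by rw [hqs]; ring⟩)
    have cbc : Nat.Coprime p₂ q₁ :=
      Nat.Coprime.coprime_dvd_left ⟨p₁, by rw [hps]; ring⟩ (hcop.coprime_dvd_right ⟨q₂, hqs⟩)
    have ccd : Nat.Coprime q₁ q₂ :=
      Nat.Coprime.coprime_dvd_left ⟨p₁, by rw [hms]; ring⟩
        (hm'n'cop.coprime_dvd_right ⟨p₂, by rw [hns]; ring⟩)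
    obtain ⟨M, N, hM, hN, hMNcop, hMN2, C, hCeq⟩ := core hp₁ hp₂ hq₁ hq₂ cad cbc ccd heqA
    -- recursion: M*N < k
    have hlt : M * N < k := by
      have h1 : 1 ≤ M * N := Nat.one_le_iff_ne_zero.mpr (Nat.mul_ne_zero (by omega) (by omega))
      have h2 : q₂ ≤ q := by
        calc q₂ ≤ q₁ * q₂ := Nat.le_mul_of_pos_left _ hq₁
        _ = q := hqs.symm
      have h3 : q ≤ p * q := Nat.le_mul_of_pos_left _ hp
      have h4 : 2 * (M * N) ≤ k := by omega
      omega
    exact IH (M*N) hlt M N C rfl hM hN hMNcop hCeq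
  · -- q² - p² = m² + 3n²  (q > p side)
    have hcaseB : (q:ℤ)^2 - (p:ℤ)^2 = ((m':ℕ):ℤ)^2 + 3*((n':ℕ):ℤ)^2 := by
      rw [hm'2, hn'2]; linarith [hcase]
    obtain ⟨p₁, p₂, q₁, q₂, hps, hqs, hms, hns⟩ := four_split hpqmn hcop hm'n'cop
    have hp₁ : 0 < p₁ := Nat.pos_of_ne_zero (by rintro rfl; simp at hps; omega)
    have hp₂ : 0 < p₂ := Nat.pos_of_ne_zero (by rintro rfl; simp at hps; omega)
    have hq₁ : 0 < q₁ := Nat.pos_of_ne_zero (by rintro rfl; simp at hqs; omega)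
    have hq₂ : 0 < q₂ := Nat.pos_of_ne_zero (by rintro rfl; simp at hqs; omega)
    rw [hps, hqs, hms, hns] at hcaseB
    push_cast at hcaseB
    have heqB : (q₁:ℤ)^2*((q₂:ℤ)^2-(p₁:ℤ)^2) = (p₂:ℤ)^2*((p₁:ℤ)^2+3*(q₂:ℤ)^2) := by
      linear_combination hcaseB
    have cad : Nat.Coprime q₁ p₂ :=
      Nat.Coprime.coprime_dvd_left ⟨q₂, hqs⟩ (hcop.symm.coprime_dvd_right ⟨p₁, by rw [hps]; ring⟩)
    have cbc : Nat.Coprime q₂ p₁ :=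
      Nat.Coprime.coprime_dvd_left ⟨q₁, by rw [hqs]; ring⟩ (hcop.symm.coprime_dvd_right ⟨p₂, hps⟩)
    have ccd : Nat.Coprime p₁ p₂ :=
      Nat.Coprime.coprime_dvd_left ⟨q₁, hms⟩
        (hm'n'cop.coprime_dvd_right ⟨q₂, hns⟩)
    obtain ⟨M, N, hM, hN, hMNcop, hMN2, C, hCeq⟩ := core hq₁ hq₂ hp₁ hp₂ cad cbc ccd heqB
    have hlt : M * N < k := by
      have h1 : 1 ≤ M * N := Nat.one_le_iff_ne_zero.mpr (Nat.mul_ne_zero (by omega) (by omega))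
      have h2 : p₂ ≤ p := by
        calc p₂ ≤ p₁ * p₂ := Nat.le_mul_of_pos_left _ hp₁
        _ = p := hps.symm
      have h3 : p ≤ p * q := Nat.le_mul_of_pos_right _ hq
      have h4 : 2 * (M * N) ≤ k := by omega
      omega
    exact IH (M*N) hlt M N C rfl hM hN hMNcop hCeq



private lemma no_pt_E' (X Y : ℚ) (hX : X ≠ 0) (h : Y^2 = X^3 - 14*X^2 + X) : False := by
  set u : ℤ := X.num with hu
  set v : ℤ := (X.den : ℤ) with hv
  have hvpos : (0:ℤ) < v := by rw [hv]; exact_mod_cast X.pos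
  have hDv : ((X.den:ℚ)) = ((v:ℤ):ℚ) := by rw [hv]; push_cast; rfl
  have hvQ : ((v:ℤ):ℚ) ≠ 0 := by
    intro h0
    rw [Int.cast_eq_zero] at h0
    omega
  have hXv : (X:ℚ) * ((v:ℤ):ℚ) = ((u:ℤ):ℚ) := by
    rw [hu, hv]
    push_cast
    rw [Rat.mul_den_eq_num]
  have hune : u ≠ 0 := Rat.num_ne_zero.mpr hX
  have key : (Y * (X.den:ℚ)^2)^2 = (((u*v*(u^2 - 14*u*v + v^2)) : ℤ) : ℚ) := by
    rw [hDv]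
    push_cast
    linear_combination (((v:ℤ):ℚ))^4 * h +
      ((((v:ℤ):ℚ))*(X^2*(((v:ℤ):ℚ))^2 + X*(((v:ℤ):ℚ))*(((u:ℤ):ℚ)) + (((u:ℤ):ℚ))^2)
        - 14*(((v:ℤ):ℚ))^2*(X*(((v:ℤ):ℚ))+(((u:ℤ):ℚ))) + (((v:ℤ):ℚ))^3) * hXv
  -- c is an integer
  set c : ℚ := Y * (X.den:ℚ)^2 with hc
  have hcden : c.den = 1 := by
    have h1 : (c*c).den = c.den * c.den := Rat.mul_self_den c
    have h2 : c * c = (((u*v*(u^2 - 14*u*v + v^2)) : ℤ) : ℚ) := by rw [← sq]; exact key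
    rw [h2, Rat.den_intCast] at h1
    exact Nat.eq_one_of_mul_eq_one_left h1.symm
  obtain ⟨c₀, hc₀⟩ : ∃ c₀ : ℤ, (c₀ : ℚ) = c := ⟨c.num, by
    conv_rhs => rw [← Rat.num_div_den c]
    rw [hcden]; simp⟩
  have keyZ : c₀^2 = u*v*(u^2 - 14*u*v + v^2) := by
    have : ((c₀^2 : ℤ) : ℚ) = (((u*v*(u^2 - 14*u*v + v^2)) : ℤ) : ℚ) := by
      push_cast
      rw [hc₀]
      push_cast at key ⊢
      linear_combination key
    exact_mod_cast this
  -- now pure integer arithmetic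
  have hcoprime_uv : IsCoprime u v := by
    rw [Int.isCoprime_iff_gcd_eq_one, hu, hv]
    exact X.reduced
  -- u must be positive
  have hupos : 0 < u := by
    rcases lt_trichotomy u 0 with hneg | h0 | h
    · exfalso
      have hK : 0 < u^2 - 14*u*v + v^2 := by nlinarith
      have hmul : u * (v * (u^2 - 14*u*v + v^2)) < 0 :=
        mul_neg_of_neg_of_pos hneg (mul_pos hvpos hK)
      nlinarith [sq_nonneg c₀, keyZ, hmul]
    · exact absurd h0 hune
    · exact h
  set K : ℤ := u^2 - 14*u*v + v^2 with hK
  have hKne : K ≠ 0 := by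
    intro h0
    have h48 : (u - 7*v)^2 = 3*(4*v)^2 := by linear_combination h0
    have := int_sq3 h48
    omega
  have hKpos : 0 < K := by
    rcases lt_trichotomy K 0 with hneg | h0 | h
    · exfalso; nlinarith [sq_nonneg c₀, keyZ]
    · exact absurd h0 hKne
    · exact h
  have hcop_uK : IsCoprime u K := by
    have h1 : K = v^2 + u*(u - 14*v) := by rw [hK]; ring
    rw [h1]
    exact (hcoprime_uv.pow_right).add_mul_left_right _
  have hcop_vK : IsCoprime v K := by
    have h1 : K = u^2 + v*(v - 14*u) := by rw [hK]; ring
    rw [h1]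
    exact (hcoprime_uv.symm.pow_right).add_mul_left_right _
  have hcop_uvK : IsCoprime (u*v) K := hcop_uK.mul_left hcop_vK
  have hprod : (u*v) * K = c₀^2 := by rw [keyZ, hK]
  obtain ⟨g, hg⟩ := Int.sq_of_isCoprime (c := c₀) hcop_uvK.symm (by linear_combination hprod)
  have hKg : K = g^2 := by
    rcases hg with h' | h'
    · exact h'
    · exfalso; nlinarith [sq_nonneg g]
  obtain ⟨hh, hhh⟩ := Int.sq_of_isCoprime hcop_uvK hprod
  have huv_h : u*v = hh^2 := by
    rcases hhh with h' | h'
    · exact h'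
    · exfalso; nlinarith [sq_nonneg hh, mul_pos hupos hvpos]
  obtain ⟨s, hs⟩ := Int.sq_of_isCoprime hcoprime_uv huv_h
  have hus : u = s^2 := by
    rcases hs with h' | h'
    · exact h'
    · exfalso; nlinarith [sq_nonneg s]
  obtain ⟨e, he⟩ := Int.sq_of_isCoprime (c := hh) hcoprime_uv.symm (by linear_combination huv_h)
  have hve : v = e^2 := by
    rcases he with h' | h'
    · exact h'
    · exfalso; nlinarith [sq_nonneg e]
  -- assemble the quartic equation
  have hquartic : s^4 - 14*s^2*e^2 + e^4 = g^2 := by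
    rw [← hKg, hK, hus, hve]; ring
  have hsne : s ≠ 0 := by intro h0; rw [h0] at hus; simp at hus; omega
  have hene : e ≠ 0 := by intro h0; rw [h0] at hve; simp at hve; omega
  set p : ℕ := s.natAbs with hp
  set q : ℕ := e.natAbs with hq
  have hp2 : ((p:ℕ):ℤ)^2 = s^2 := Int.natAbs_sq s
  have hq2 : ((q:ℕ):ℤ)^2 = e^2 := Int.natAbs_sq e
  have hppos : 0 < p := Int.natAbs_pos.mpr hsne
  have hqpos : 0 < q := Int.natAbs_pos.mpr hene
  have hpqcop : Nat.Coprime p q := by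
    have h1 : Int.gcd s e = 1 := by
      set G : ℕ := Int.gcd s e with hG
      have hGs : (G:ℤ) ∣ s := Int.gcd_dvd_left _ _
      have hGe : (G:ℤ) ∣ e := Int.gcd_dvd_right _ _
      have hGu : (G:ℤ) ∣ u := by rw [hus]; exact Dvd.dvd.pow hGs (by norm_num)
      have hGv : (G:ℤ) ∣ v := by rw [hve]; exact Dvd.dvd.pow hGe (by norm_num)
      have h2 : (G:ℤ) ∣ (Int.gcd u v : ℤ) := Int.dvd_coe_gcd hGu hGv
      rw [Int.isCoprime_iff_gcd_eq_one.mp hcoprime_uv] at h2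
      exact Nat.dvd_one.mp (by exact_mod_cast h2)
    exact h1
  have heqfinal : ((p:ℕ):ℤ)^4 - 14*((p:ℕ):ℤ)^2*((q:ℕ):ℤ)^2 + ((q:ℕ):ℤ)^4 = g^2 := by
    linear_combination hquartic + ((p:ℤ)^2 + s^2 - 14*(q:ℤ)^2) * hp2 + ((q:ℤ)^2 + e^2 - 14*s^2) * hq2
  exact Tstar_aux (p*q) p q g rfl hppos hqpos hpqcop heqfinal



/-- The set of affine rational points of the elliptic curve
`O₁₂ : y² = x³ + 7x² + 12x` over `ℚ` consists of exactly three points. -/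
theorem stmt_6 :
    {p : ℚ × ℚ | p.2 ^ 2 = p.1 ^ 3 + 7 * p.1 ^ 2 + 12 * p.1} = {(0, 0), (-3, 0), (-4, 0)} := by
  ext ⟨x, y⟩
  simp only [Set.mem_setOf_eq, Set.mem_insert_iff, Set.mem_singleton_iff, Prod.mk.injEq]
  constructor
  · intro h
    by_cases hy : y = 0
    · subst hy
      have hfact : x * (x + 3) * (x + 4) = 0 := by linear_combination -h
      rcases mul_eq_zero.mp hfact with h1 | h1
      · rcases mul_eq_zero.mp h1 with h2 | h2
        · exact Or.inl ⟨h2, rfl⟩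
        · exact Or.inr (Or.inl ⟨by linarith, rfl⟩)
      · exact Or.inr (Or.inr ⟨by linarith, rfl⟩)
    · exfalso
      have hx : x ≠ 0 := by
        intro h0
        rw [h0] at h
        apply hy
        have : y^2 = 0 := by linarith [h]
        exact pow_eq_zero_iff (by norm_num) |>.mp this
      set X : ℚ := (y/x)^2 with hX
      set Y : ℚ := y*(x^2-12)/x^2 with hY
      have hXne : X ≠ 0 := by
        rw [hX]
        positivity
      have hmain : Y^2 = X^3 - 14*X^2 + X := by
        rw [hX, hY]
        field_simp
        linear_combination (-(y^2 + (x^3+7*x^2+12*x) - 14*x^2)) * h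
      exact no_pt_E' X Y hXne hmain
  · rintro (⟨rfl, rfl⟩ | ⟨rfl, rfl⟩ | ⟨rfl, rfl⟩) <;> norm_num
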